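/- Let 𝓔 = {ln n : n ∈ ℕ, n ≥ 1} with weight ω ≡ 1. Then the growth function satisfies 𝓝(t) = Card{n ≥ 1 : ln n ≤ t} = e^t (1 + O(e^{-t})); more precisely 𝓝(t) = ⌊e^t⌋ for t ≥ 0, so |𝓝(t) - e^t| ≤ 1. Consequently, for all reals a < b, Card{(m,n) ∈ ℕ² : 1 ≤ m,n ≤ e^N, a ≤ ln n - ln m ≤ b} ~ (1/2) ⌊e^N⌋² ∫_a^b e^{-|t|} dt as N → ∞. -/

import Mathlib

open Filter Real

section LogPCAux

open Finset

noncomputable def hfun (C : ℝ) : ℝ := if C ≤ 1 then C / 2 else 1 - 1 / (2 * C)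



lemma sum_Icc_id (M : ℕ) : ∑ m ∈ Finset.Icc 1 M, (m : ℝ) = M * (M + 1) / 2 := by
  induction M with
  | zero => simp
  | succ n ih =>
    rw [Finset.sum_Icc_succ_top (by omega)]
    push_cast
    rw [ih]; ring

lemma tendsto_floor_div (C : ℝ) (hC : 0 < C) :
    Tendsto (fun M : ℕ => (⌊(M : ℝ) / C⌋₊ : ℝ) / M) atTop (nhds (1 / C)) := by
  apply tendsto_of_tendsto_of_tendsto_of_le_of_le' (g := fun M : ℕ => 1/C - 1/M)
    (h := fun _ : ℕ => 1/C)
  · simpa using tendsto_const_nhds.sub (tendsto_one_div_atTop_nhds_zero_nat (𝕜 := ℝ))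
  · exact tendsto_const_nhds
  · filter_upwards [eventually_ge_atTop 1] with M hM
    have hM0 : (0:ℝ) < M := by exact_mod_cast hM
    have h1 : (M:ℝ)/C - 1 < ⌊(M:ℝ)/C⌋₊ := Nat.sub_one_lt_floor _
    have e : 1/C - 1/(M:ℝ) = ((M:ℝ)/C - 1)/M := by field_simp
    rw [e]
    exact div_le_div_of_nonneg_right h1.le hM0.le |>.trans_eq rfl
  · filter_upwards [eventually_ge_atTop 1] with M hM
    have hM0 : (0:ℝ) < M := by exact_mod_cast hM
    have h1 : (⌊(M:ℝ)/C⌋₊:ℝ) ≤ (M:ℝ)/C := Nat.floor_le (by positivity)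
    calc (⌊(M:ℝ)/C⌋₊:ℝ)/M ≤ ((M:ℝ)/C)/M := by
          apply div_le_div_of_nonneg_right h1 hM0.le
      _ = 1/C := by field_simp


lemma tendsto_S (C : ℝ) (hC : 0 < C) :
    Tendsto (fun M : ℕ => (∑ m ∈ Finset.Icc 1 M, min (M:ℝ) (C * m)) / (M:ℝ) ^ 2)
      atTop (nhds (hfun C)) := by
  rcases le_or_gt C 1 with hc | hc
  · have key : ∀ M : ℕ, (∑ m ∈ Finset.Icc 1 M, min (M:ℝ) (C * m)) = C * (M * (M+1)/2) := by
      intro M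
      rw [← sum_Icc_id M, Finset.mul_sum]
      apply Finset.sum_congr rfl
      intro m hm
      rw [Finset.mem_Icc] at hm
      have h1 : C * m ≤ (M:ℝ) := by
        have : (m:ℝ) ≤ M := by exact_mod_cast hm.2
        nlinarith [hm.1, this]
      rw [min_eq_right h1]
    simp only [key, hfun, if_pos hc]
    have : Tendsto (fun M : ℕ => C/2 * (1 + 1/(M:ℝ))) atTop (nhds (C/2 * (1 + 0))) := by
      exact tendsto_const_nhds.mul (tendsto_const_nhds.add tendsto_one_div_atTop_nhds_zero_nat)
    rw [show C/2 = C/2 * (1+0) by ring]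
    apply this.congr'
    filter_upwards [eventually_ge_atTop 1] with M hM
    have hM0 : (0:ℝ) < M := by exact_mod_cast hM
    field_simp
  · -- C > 1
    have key : ∀ M : ℕ, (∑ m ∈ Finset.Icc 1 M, min (M:ℝ) (C * m))
        = C * ((⌊(M:ℝ)/C⌋₊:ℝ) * ((⌊(M:ℝ)/C⌋₊:ℝ) + 1) / 2) + ((M:ℝ) - (⌊(M:ℝ)/C⌋₊:ℝ)) * M := by
      intro M
      set K := ⌊(M:ℝ)/C⌋₊ with hK
      have hdiv : (M:ℝ)/C ≤ M := by
        rw [div_le_iff₀ hC]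
        nlinarith [Nat.cast_nonneg (α := ℝ) M]
      have hKM : K ≤ M := by
        calc K ≤ ⌊(M:ℝ)⌋₊ := Nat.floor_mono hdiv
          _ = M := Nat.floor_natCast M
      have hKle : (K:ℝ) ≤ (M:ℝ)/C := Nat.floor_le (by positivity)
      have hKgt : (M:ℝ)/C < (K:ℝ) + 1 := Nat.lt_floor_add_one _
      have e1 : Finset.Icc 1 M = Finset.Ioc 0 M := by rw [← Finset.Icc_add_one_left_eq_Ioc]; rfl
      have e2 : Finset.Icc 1 K = Finset.Ioc 0 K := by rw [← Finset.Icc_add_one_left_eq_Ioc]; rfl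
      rw [e1, ← Finset.sum_Ioc_consecutive _ (Nat.zero_le K) hKM]
      have s1 : (∑ m ∈ Finset.Ioc 0 K, min (M:ℝ) (C * m)) = C * ((K:ℝ) * ((K:ℝ)+1)/2) := by
        rw [← e2]
        have : ∀ m ∈ Finset.Icc 1 K, min (M:ℝ) (C * m) = C * m := by
          intro m hm
          rw [Finset.mem_Icc] at hm
          apply min_eq_right
          have h1 : (m:ℝ) ≤ K := by exact_mod_cast hm.2
          have h2 : C * (K:ℝ) ≤ M := by
            rw [mul_comm, ← le_div_iff₀ hC]
            exact hKle
          nlinarith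
        rw [Finset.sum_congr rfl this, ← Finset.mul_sum, sum_Icc_id]
      have s2 : (∑ m ∈ Finset.Ioc K M, min (M:ℝ) (C * m)) = ((M:ℝ) - (K:ℝ)) * M := by
        have : ∀ m ∈ Finset.Ioc K M, min (M:ℝ) (C * m) = (M:ℝ) := by
          intro m hm
          rw [Finset.mem_Ioc] at hm
          apply min_eq_left
          have h1 : (K:ℝ) + 1 ≤ m := by exact_mod_cast hm.1
          have h2 : (M:ℝ) < C * ((K:ℝ)+1) := by
            rw [div_lt_iff₀ hC] at hKgt; linarith [hKgt]
          nlinarith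
        rw [Finset.sum_congr rfl this, Finset.sum_const, Nat.card_Ioc, nsmul_eq_mul,
          Nat.cast_sub hKM]
      rw [s1, s2]
    simp only [key, hfun, if_neg (not_le.mpr hc)]
    have hr := tendsto_floor_div C hC
    have hlim : Tendsto (fun M : ℕ =>
        C * ((⌊(M:ℝ)/C⌋₊:ℝ)/M * ((⌊(M:ℝ)/C⌋₊:ℝ)/M + 1/M))/2 + (1 - (⌊(M:ℝ)/C⌋₊:ℝ)/M))
        atTop (nhds (C * ((1/C) * (1/C + 0))/2 + (1 - 1/C))) := by
      exact (((tendsto_const_nhds.mul (hr.mul (hr.add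
        tendsto_one_div_atTop_nhds_zero_nat))).div_const 2).add
        (tendsto_const_nhds.sub hr))
    have heq : (C * ((1/C) * (1/C + 0))/2 + (1 - 1/C)) = 1 - 1/(2*C) := by
      field_simp; ring
    rw [heq] at hlim
    apply hlim.congr'
    filter_upwards [eventually_ge_atTop 1] with M hM
    have hM0 : (0:ℝ) < M := by exact_mod_cast hM
    field_simp

lemma cnt_eq (A B : ℝ) (hA : 0 < A) (hAB : A ≤ B) (M : ℕ) :
    Nat.card {p : ℕ × ℕ | 1 ≤ p.1 ∧ 1 ≤ p.2 ∧ p.1 ≤ M ∧ p.2 ≤ M ∧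
        A * p.1 ≤ (p.2:ℝ) ∧ (p.2:ℝ) ≤ B * p.1}
      = ∑ m ∈ Finset.Icc 1 M, (min M ⌊B*(m:ℝ)⌋₊ + 1 - ⌈A*(m:ℝ)⌉₊) := by
  have hset : {p : ℕ × ℕ | 1 ≤ p.1 ∧ 1 ≤ p.2 ∧ p.1 ≤ M ∧ p.2 ≤ M ∧
        A * p.1 ≤ (p.2:ℝ) ∧ (p.2:ℝ) ≤ B * p.1}
      = ↑((Finset.Icc 1 M ×ˢ Finset.Icc 1 M).filter
          (fun p => A * p.1 ≤ (p.2:ℝ) ∧ (p.2:ℝ) ≤ B * p.1)) := by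
    ext p
    simp only [Set.mem_setOf_eq, Finset.coe_filter, Finset.mem_product, Finset.mem_Icc]
    tauto
  rw [hset, Nat.card_coe_set_eq, Set.ncard_coe_finset, Finset.card_filter,
    Finset.sum_product]
  apply Finset.sum_congr rfl
  intro m hm
  rw [Finset.mem_Icc] at hm
  have hm1 : (1:ℝ) ≤ m := by exact_mod_cast hm.1
  have hAm : 0 < A * m := by positivity
  have hfil : (Finset.Icc 1 M).filter (fun n : ℕ => A * m ≤ (n:ℝ) ∧ (n:ℝ) ≤ B * m)
      = Finset.Icc (⌈A*(m:ℝ)⌉₊) (min M ⌊B*(m:ℝ)⌋₊) := by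
    ext n
    simp only [Finset.mem_filter, Finset.mem_Icc, le_min_iff, Nat.ceil_le]
    constructor
    · rintro ⟨⟨h1, h2⟩, h3, h4⟩
      exact ⟨h3, h2, Nat.le_floor h4⟩
    · rintro ⟨h1, h2, h3⟩
      refine ⟨⟨?_, h2⟩, h1, ?_⟩
      · have : 0 < n := by exact_mod_cast hAm.trans_le h1
        omega
      · calc (n:ℝ) ≤ ⌊B*(m:ℝ)⌋₊ := by exact_mod_cast h3
          _ ≤ B * m := Nat.floor_le (by nlinarith)
  rw [← Finset.card_filter, hfil, Nat.card_Icc]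

lemma term_bounds (A B : ℝ) (hA : 0 < A) (hAB : A ≤ B) (M m : ℕ) (hm : 1 ≤ m) (hmM : m ≤ M) :
    min (M:ℝ) (B*m) - min (M:ℝ) (A*m) - 1 ≤ ((min M ⌊B*(m:ℝ)⌋₊ + 1 - ⌈A*(m:ℝ)⌉₊ : ℕ):ℝ) ∧
    ((min M ⌊B*(m:ℝ)⌋₊ + 1 - ⌈A*(m:ℝ)⌉₊ : ℕ):ℝ) ≤ min (M:ℝ) (B*m) - min (M:ℝ) (A*m) + 1 := by
  have hm1 : (1:ℝ) ≤ m := by exact_mod_cast hm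
  have hAm : 0 < A * m := by positivity
  have hBm : 0 < B * m := by nlinarith
  have hABm : A * m ≤ B * m := by nlinarith
  set x := min M ⌊B*(m:ℝ)⌋₊ with hx
  set y := ⌈A*(m:ℝ)⌉₊ with hy
  have hxM : x ≤ M := min_le_left _ _
  have hxMr : (x:ℝ) ≤ M := by exact_mod_cast hxM
  have hx1 : (x:ℝ) ≤ min (M:ℝ) (B*m) := by
    rw [hx]
    push_cast [Nat.cast_min]
    exact min_le_min le_rfl (Nat.floor_le hBm.le)
  have hx2 : min (M:ℝ) (B*m) - 1 ≤ (x:ℝ) := by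
    rw [hx]
    push_cast [Nat.cast_min]
    refine le_min ?_ ?_
    · linarith [min_le_left (M:ℝ) (B*m)]
    · linarith [min_le_right (M:ℝ) (B*m), Nat.sub_one_lt_floor (B*(m:ℝ))]
  have hy1 : A*m ≤ (y:ℝ) := Nat.le_ceil _
  have hy2 : (y:ℝ) < A*m + 1 := Nat.ceil_lt_add_one hAm.le
  have hminA : min (M:ℝ) (A*m) ≤ A*m := min_le_right _ _
  have hminmono : min (M:ℝ) (A*m) ≤ min (M:ℝ) (B*m) := min_le_min le_rfl hABm
  by_cases hxy : y ≤ x + 1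
  · rw [Nat.cast_sub hxy]
    push_cast
    have hymin : (y:ℝ) ≤ min (M:ℝ) (A*m) + 1 := by
      rcases le_total (A*(m:ℝ)) (M:ℝ) with h | h
      · rw [min_eq_right h]; linarith
      · rw [min_eq_left h]
        have : (y:ℝ) ≤ (x:ℝ) + 1 := by exact_mod_cast hxy
        linarith
    constructor <;> linarith
  · push_neg at hxy
    rw [Nat.sub_eq_zero_of_le (by omega), Nat.cast_zero]
    have hxy2 : (x:ℝ) + 2 ≤ y := by exact_mod_cast (by omega : x + 2 ≤ y)
    have hlt : min (M:ℝ) (B*m) < A*m := by linarith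
    constructor
    · rcases le_total (A*(m:ℝ)) (M:ℝ) with h | h
      · rw [min_eq_right h]; linarith
      · rw [min_eq_left h]; linarith [min_le_left (M:ℝ) (B*m)]
    · linarith


lemma cnt_tendsto (A B : ℝ) (hA : 0 < A) (hAB : A < B) :
    Tendsto (fun M : ℕ => ((Nat.card {p : ℕ × ℕ | 1 ≤ p.1 ∧ 1 ≤ p.2 ∧ p.1 ≤ M ∧ p.2 ≤ M ∧
        A * p.1 ≤ (p.2:ℝ) ∧ (p.2:ℝ) ≤ B * p.1} : ℕ) : ℝ) / (M:ℝ)^2)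
      atTop (nhds (hfun B - hfun A)) := by
  have hB : 0 < B := hA.trans hAB
  set S : ℝ → ℕ → ℝ := fun C M => ∑ m ∈ Finset.Icc 1 M, min (M:ℝ) (C * m) with hS
  have hbounds : ∀ M : ℕ,
      S B M - S A M - M ≤ ((Nat.card {p : ℕ × ℕ | 1 ≤ p.1 ∧ 1 ≤ p.2 ∧ p.1 ≤ M ∧ p.2 ≤ M ∧
        A * p.1 ≤ (p.2:ℝ) ∧ (p.2:ℝ) ≤ B * p.1} : ℕ) : ℝ) ∧
      ((Nat.card {p : ℕ × ℕ | 1 ≤ p.1 ∧ 1 ≤ p.2 ∧ p.1 ≤ M ∧ p.2 ≤ M ∧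
        A * p.1 ≤ (p.2:ℝ) ∧ (p.2:ℝ) ≤ B * p.1} : ℕ) : ℝ) ≤ S B M - S A M + M := by
    intro M
    rw [cnt_eq A B hA hAB.le M, Nat.cast_sum]
    have e1 : S B M - S A M - M = ∑ m ∈ Finset.Icc 1 M, (min (M:ℝ) (B*m) - min (M:ℝ) (A*m) - 1) := by
      simp [hS, Finset.sum_sub_distrib, Finset.sum_const, Nat.card_Icc]
    have e2 : S B M - S A M + M = ∑ m ∈ Finset.Icc 1 M, (min (M:ℝ) (B*m) - min (M:ℝ) (A*m) + 1) := by
      simp [hS, Finset.sum_sub_distrib, Finset.sum_add_distrib, Finset.sum_const, Nat.card_Icc]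
    rw [e1, e2]
    constructor
    · apply Finset.sum_le_sum
      intro m hm
      rw [Finset.mem_Icc] at hm
      exact (term_bounds A B hA hAB.le M m hm.1 hm.2).1
    · apply Finset.sum_le_sum
      intro m hm
      rw [Finset.mem_Icc] at hm
      exact (term_bounds A B hA hAB.le M m hm.1 hm.2).2
  have hzero : Tendsto (fun M : ℕ => (M:ℝ)/(M:ℝ)^2) atTop (nhds 0) := by
    apply tendsto_one_div_atTop_nhds_zero_nat.congr
    intro M
    rcases Nat.eq_zero_or_pos M with h | h
    · simp [h]
    · have : (M:ℝ) ≠ 0 := by positivity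
      field_simp
  have lowerT : Tendsto (fun M : ℕ => (S B M - S A M - M)/(M:ℝ)^2) atTop
      (nhds (hfun B - hfun A)) := by
    have := ((tendsto_S B hB).sub (tendsto_S A hA)).sub hzero
    rw [sub_zero] at this
    exact this.congr (fun M => by rw [sub_div, sub_div])
  have upperT : Tendsto (fun M : ℕ => (S B M - S A M + M)/(M:ℝ)^2) atTop
      (nhds (hfun B - hfun A)) := by
    have := ((tendsto_S B hB).sub (tendsto_S A hA)).add hzero
    rw [add_zero] at this
    exact this.congr (fun M => by rw [add_div, sub_div])
  apply tendsto_of_tendsto_of_tendsto_of_le_of_le' lowerT upperT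
  · filter_upwards [eventually_ge_atTop 1] with M hM
    have hM0 : (0:ℝ) < (M:ℝ)^2 := by positivity
    exact div_le_div_of_nonneg_right (hbounds M).1 hM0.le |>.trans_eq rfl
  · filter_upwards [eventually_ge_atTop 1] with M hM
    have hM0 : (0:ℝ) < (M:ℝ)^2 := by positivity
    exact div_le_div_of_nonneg_right (hbounds M).2 hM0.le |>.trans_eq rfl


lemma int_neg_side (a b : ℝ) (hab : a ≤ b) (hb : b ≤ 0) :
    ∫ t in a..b, Real.exp (-|t|) = Real.exp b - Real.exp a := by
  rw [show (∫ t in a..b, Real.exp (-|t|)) = ∫ t in a..b, Real.exp t from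
    intervalIntegral.integral_congr (fun t ht => by
      rw [Set.uIcc_of_le hab] at ht
      rw [abs_of_nonpos (ht.2.trans hb), neg_neg]), integral_exp]

lemma int_pos_side (a b : ℝ) (hab : a ≤ b) (ha : 0 ≤ a) :
    ∫ t in a..b, Real.exp (-|t|) = Real.exp (-a) - Real.exp (-b) := by
  rw [show (∫ t in a..b, Real.exp (-|t|)) = ∫ t in a..b, Real.exp (-t) from
    intervalIntegral.integral_congr (fun t ht => by
      rw [Set.uIcc_of_le hab] at ht
      rw [abs_of_nonneg (ha.trans ht.1)]),
    intervalIntegral.integral_comp_neg (fun t => Real.exp t), integral_exp]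

lemma exp_abs_integrable (a b : ℝ) : IntervalIntegrable (fun t => Real.exp (-|t|))
    MeasureTheory.volume a b :=
  (Real.continuous_exp.comp continuous_abs.neg).intervalIntegrable a b

lemma integral_eq (a b : ℝ) (hab : a ≤ b) :
    ∫ t in a..b, Real.exp (-|t|) = 2 * (hfun (Real.exp b) - hfun (Real.exp a)) := by
  have hhe : ∀ t : ℝ, hfun (Real.exp t) = if t ≤ 0 then Real.exp t / 2 else 1 - Real.exp (-t) / 2 := by
    intro t
    rw [hfun]
    by_cases h : t ≤ 0
    · rw [if_pos (Real.exp_le_one_iff.mpr h), if_pos h]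
    · rw [if_neg (by rw [Real.exp_le_one_iff]; exact h), if_neg h, Real.exp_neg]
      field_simp
  rw [hhe, hhe]
  rcases le_or_gt b 0 with hb | hb
  · rw [int_neg_side a b hab hb, if_pos hb, if_pos (hab.trans hb)]
    ring
  · rcases le_or_gt 0 a with ha | ha
    · rw [int_pos_side a b hab ha, if_neg (not_le.mpr hb)]
      split_ifs with h
      · have : a = 0 := le_antisymm h ha
        subst this
        simp [Real.exp_zero]
        ring
      · ring
    · rw [← intervalIntegral.integral_add_adjacent_intervals (b := 0)
        (exp_abs_integrable a 0) (exp_abs_integrable 0 b),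
        int_neg_side a 0 ha.le le_rfl, int_pos_side 0 b hb.le le_rfl,
        if_pos ha.le, if_neg (not_le.mpr hb)]
      simp [Real.exp_zero]
      ring

lemma hfun_pos (a b : ℝ) (hab : a < b) : 0 < hfun (Real.exp b) - hfun (Real.exp a) := by
  have hA : 0 < Real.exp a := Real.exp_pos a
  have hB : 0 < Real.exp b := Real.exp_pos b
  have hAB : Real.exp a < Real.exp b := Real.exp_lt_exp.mpr hab
  set A := Real.exp a
  set B := Real.exp b
  rw [hfun, hfun]
  split_ifs with h1 h2 h2
  · linarith
  · linarith
  · have : 1 / (2*B) < 1/2 := by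
      rw [div_lt_div_iff₀ (by linarith) (by norm_num)]
      linarith
    linarith
  · push_neg at h1 h2
    have : 1/(2*B) < 1/(2*A) := by
      apply one_div_lt_one_div_of_lt <;> linarith
    linarith

lemma key_iff (m n : ℕ) (hm : 1 ≤ m) (hn : 1 ≤ n) (c : ℝ) :
    (c ≤ Real.log n - Real.log m ↔ Real.exp c * m ≤ n) ∧
    (Real.log n - Real.log m ≤ c ↔ (n:ℝ) ≤ Real.exp c * m) := by
  have hm0 : (0:ℝ) < m := by exact_mod_cast hm
  have hn0 : (0:ℝ) < n := by exact_mod_cast hn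
  have he : Real.exp (Real.log n - Real.log m) = n / m := by
    rw [Real.exp_sub, Real.exp_log hn0, Real.exp_log hm0]
  constructor
  · rw [← Real.exp_le_exp, he, le_div_iff₀ hm0]
  · rw [← Real.exp_le_exp, he, div_le_iff₀ hm0]

end LogPCAux

/-- The archetypical example `𝓔 = {ln n : n ≥ 1}`: the growth function is
`⌊e^t⌋` for `t ≥ 0`, hence `e^t(1 + O(e^{-t}))`, and the pair correlation count
satisfies Corollary 1.2 with `δ = 1`. -/
theorem log_integers_pair_correlation :
    (∀ t : ℝ, 0 ≤ t →
      Nat.card {n : ℕ | 1 ≤ n ∧ Real.log n ≤ t} = ⌊Real.exp t⌋₊ ∧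
      |(⌊Real.exp t⌋₊ : ℝ) - Real.exp t| ≤ 1) ∧
    ∀ a b : ℝ, a < b →
      Tendsto (fun N : ℕ =>
          (Nat.card {p : ℕ × ℕ | 1 ≤ p.1 ∧ 1 ≤ p.2 ∧
              (p.1 : ℝ) ≤ Real.exp N ∧ (p.2 : ℝ) ≤ Real.exp N ∧
              a ≤ Real.log p.2 - Real.log p.1 ∧ Real.log p.2 - Real.log p.1 ≤ b} : ℝ) /
            (1 / 2 * (⌊Real.exp N⌋₊ : ℝ) ^ 2 * ∫ t in a..b, Real.exp (-|t|)))
        atTop (nhds 1) := by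
  constructor
  · intro t ht
    have hexp1 : (1:ℝ) ≤ Real.exp t := Real.one_le_exp ht
    constructor
    · have hset : {n : ℕ | 1 ≤ n ∧ Real.log n ≤ t} = Set.Icc 1 ⌊Real.exp t⌋₊ := by
        ext n
        simp only [Set.mem_setOf_eq, Set.mem_Icc]
        constructor
        · rintro ⟨h1, h2⟩
          have hn0 : (0:ℝ) < n := by exact_mod_cast h1
          exact ⟨h1, Nat.le_floor ((Real.log_le_iff_le_exp hn0).mp h2)⟩
        · rintro ⟨h1, h2⟩
          have hn0 : (0:ℝ) < n := by exact_mod_cast h1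
          refine ⟨h1, (Real.log_le_iff_le_exp hn0).mpr ?_⟩
          calc (n:ℝ) ≤ ⌊Real.exp t⌋₊ := by exact_mod_cast h2
            _ ≤ Real.exp t := Nat.floor_le (by positivity)
      rw [hset, ← Finset.coe_Icc, Nat.card_coe_set_eq, Set.ncard_coe_finset, Nat.card_Icc]
      omega
    · rw [abs_le]
      constructor
      · linarith [Nat.lt_floor_add_one (Real.exp t)]
      · linarith [Nat.floor_le (Real.exp_pos t).le]
  · intro a b hab
    set A := Real.exp a with hAdef
    set B := Real.exp b with hBdef
    have hA : 0 < A := Real.exp_pos a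
    have hAB : A < B := Real.exp_lt_exp.mpr hab
    set c := hfun B - hfun A with hcdef
    have hc : 0 < c := hfun_pos a b hab
    have hI : ∫ t in a..b, Real.exp (-|t|) = 2 * c := integral_eq a b hab.le
    have hsetN : ∀ N : ℕ, {p : ℕ × ℕ | 1 ≤ p.1 ∧ 1 ≤ p.2 ∧
              (p.1 : ℝ) ≤ Real.exp N ∧ (p.2 : ℝ) ≤ Real.exp N ∧
              a ≤ Real.log p.2 - Real.log p.1 ∧ Real.log p.2 - Real.log p.1 ≤ b}
        = {p : ℕ × ℕ | 1 ≤ p.1 ∧ 1 ≤ p.2 ∧ p.1 ≤ ⌊Real.exp (N:ℝ)⌋₊ ∧ p.2 ≤ ⌊Real.exp (N:ℝ)⌋₊ ∧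
            A * p.1 ≤ (p.2:ℝ) ∧ (p.2:ℝ) ≤ B * p.1} := by
      intro N
      ext p
      simp only [Set.mem_setOf_eq]
      constructor
      · rintro ⟨h1, h2, h3, h4, h5, h6⟩
        exact ⟨h1, h2, Nat.le_floor h3, Nat.le_floor h4,
          ((key_iff p.1 p.2 h1 h2 a).1).mp h5, ((key_iff p.1 p.2 h1 h2 b).2).mp h6⟩
      · rintro ⟨h1, h2, h3, h4, h5, h6⟩
        have hfl : (⌊Real.exp (N:ℝ)⌋₊ : ℝ) ≤ Real.exp (N:ℝ) := Nat.floor_le (Real.exp_pos _).le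
        refine ⟨h1, h2, ?_, ?_,
          ((key_iff p.1 p.2 h1 h2 a).1).mpr h5, ((key_iff p.1 p.2 h1 h2 b).2).mpr h6⟩
        · exact le_trans (by exact_mod_cast h3) hfl
        · exact le_trans (by exact_mod_cast h4) hfl
    have hMt : Tendsto (fun N : ℕ => ⌊Real.exp (N:ℝ)⌋₊) atTop atTop := by
      apply tendsto_atTop_mono (f := fun N : ℕ => N) _ tendsto_id
      intro N
      apply Nat.le_floor
      linarith [Real.add_one_le_exp (N:ℝ)]
    have h1 := (cnt_tendsto A B hA hAB).comp hMt
    have h2 := h1.div_const c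
    rw [div_self hc.ne'] at h2
    apply h2.congr
    intro N
    simp only [Function.comp_apply, hsetN N, hI]
    rw [div_div]
    congr 1
    ring
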